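/- Let 𝒢 = (G_1, …, G_τ) be a graph history on a finite vertex set V with |V| = n, let Q ⊆ V be a nonempty set of query nodes with Q ≠ V, and let S_0 = V, S_1, …, S_{n−1} be a score_m peeling sequence with removed vertices v_1, …, v_{n−1}. Suppose some removed vertex lies in Q, and let j be the least index with v_j ∈ Q. Then max_{0 ≤ i ≤ j−1} f_mm(S_i, 𝒢) = max_{S : Q ⊆ S ⊆ V} f_mm(S, 𝒢); that is, the Qr-FindBFF_M algorithm, which runs the minimum-score peeling and stops when a query node would be removed, solves the Qr-BFF-mm problem optimally. -/
import Mathlib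


open scoped Classical
open Finset

/-- The degree of `u` in the subgraph of `G` induced by the vertex set `S`. -/
noncomputable def degIn {n : ℕ} (G : SimpleGraph (Fin n)) (S : Finset (Fin n)) (u : Fin n) : ℕ :=
  (S.filter fun v => G.Adj u v).card

/-- The number of edges of the subgraph of `G` induced by `S`. -/
noncomputable def edgesIn {n : ℕ} (G : SimpleGraph (Fin n)) (S : Finset (Fin n)) : ℕ :=
  ((S ×ˢ S).filter fun p => p.1 < p.2 ∧ G.Adj p.1 p.2).card

/-- Minimum density `d_m(S, G)`: the minimum degree in the induced subgraph `G[S]`. -/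
noncomputable def minDensity {n : ℕ} (G : SimpleGraph (Fin n)) (S : Finset (Fin n)) : ℕ :=
  sInf ((fun u => degIn G S u) '' (S : Set (Fin n)))

/-- Average density `d_a(S, G) = 2·|E(G[S])| / |S|`. -/
noncomputable def avgDensity {n : ℕ} (G : SimpleGraph (Fin n)) (S : Finset (Fin n)) : ℝ :=
  2 * (edgesIn G S : ℝ) / (S.card : ℝ)

/-- `f_mm(S, 𝒢) = min_t d_m(S, G_t)`. -/
noncomputable def fmm {n τ : ℕ} (G : Fin τ → SimpleGraph (Fin n)) (S : Finset (Fin n)) : ℕ :=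
  sInf (Set.range fun t => minDensity (G t) S)

/-- `f_am(S, 𝒢) = (1/τ) · Σ_t d_m(S, G_t)`. -/
noncomputable def fam {n τ : ℕ} (G : Fin τ → SimpleGraph (Fin n)) (S : Finset (Fin n)) : ℝ :=
  (1 / (τ : ℝ)) * ∑ t, (minDensity (G t) S : ℝ)

/-- `f_ma(S, 𝒢) = min_t d_a(S, G_t)`. -/
noncomputable def fma {n τ : ℕ} (G : Fin τ → SimpleGraph (Fin n)) (S : Finset (Fin n)) : ℝ :=
  sInf (Set.range fun t => avgDensity (G t) S)

/-- `f_aa(S, 𝒢) = (1/τ) · Σ_t d_a(S, G_t)`. -/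
noncomputable def faa {n τ : ℕ} (G : Fin τ → SimpleGraph (Fin n)) (S : Finset (Fin n)) : ℝ :=
  (1 / (τ : ℝ)) * ∑ t, avgDensity (G t) S

/-- `score_m(v, 𝒢[S]) = min_t degree(v, G_t[S])`. -/
noncomputable def scoreM {n τ : ℕ} (G : Fin τ → SimpleGraph (Fin n)) (S : Finset (Fin n))
    (v : Fin n) : ℕ :=
  sInf (Set.range fun t => degIn (G t) S v)

/-- `score_a(v, 𝒢[S]) = (1/τ) · Σ_t degree(v, G_t[S])`. -/
noncomputable def scoreA {n τ : ℕ} (G : Fin τ → SimpleGraph (Fin n)) (S : Finset (Fin n))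
    (v : Fin n) : ℝ :=
  (1 / (τ : ℝ)) * ∑ t, (degIn (G t) S v : ℝ)

/-- A `score_m` peeling sequence: `S 0 = V`, and at each step the removed vertex `v i`
minimizes `score_m` over the current set. -/
def IsScoreMPeeling {n τ : ℕ} (G : Fin τ → SimpleGraph (Fin n)) (S : ℕ → Finset (Fin n))
    (v : ℕ → Fin n) : Prop :=
  S 0 = Finset.univ ∧
    ∀ i < n - 1, v i ∈ S i ∧ S (i + 1) = S i \ {v i} ∧
      ∀ u ∈ S i, scoreM G (S i) (v i) ≤ scoreM G (S i) u

/-- A `score_a` peeling sequence: `S 0 = V`, and at each step the removed vertex `v i`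
minimizes `score_a` over the current set. -/
def IsScoreAPeeling {n τ : ℕ} (G : Fin τ → SimpleGraph (Fin n)) (S : ℕ → Finset (Fin n))
    (v : ℕ → Fin n) : Prop :=
  S 0 = Finset.univ ∧
    ∀ i < n - 1, v i ∈ S i ∧ S (i + 1) = S i \ {v i} ∧
      ∀ u ∈ S i, scoreA G (S i) (v i) ≤ scoreA G (S i) u


private lemma degIn_mono {n : ℕ} (G : SimpleGraph (Fin n)) {S' S : Finset (Fin n)}
    (h : S' ⊆ S) (u : Fin n) : degIn G S' u ≤ degIn G S u :=
  Finset.card_le_card (Finset.filter_subset_filter _ h)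

private lemma sInf_range_le {τ : ℕ} (hτ : 0 < τ) {f g : Fin τ → ℕ}
    (h : ∀ t, f t ≤ g t) : sInf (Set.range f) ≤ sInf (Set.range g) := by
  have hne : (Set.range g).Nonempty := ⟨g ⟨0, hτ⟩, ⟨0, hτ⟩, rfl⟩
  obtain ⟨t, ht⟩ := Nat.sInf_mem hne
  exact le_trans (Nat.sInf_le ⟨t, rfl⟩) (ht ▸ h t)

private lemma scoreM_mono {n τ : ℕ} (hτ : 0 < τ) (G : Fin τ → SimpleGraph (Fin n))
    {S' S : Finset (Fin n)} (h : S' ⊆ S) (u : Fin n) :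
    scoreM G S' u ≤ scoreM G S u :=
  sInf_range_le hτ (fun t => degIn_mono (G t) h u)

private lemma fmm_le_scoreM {n τ : ℕ} (hτ : 0 < τ) (G : Fin τ → SimpleGraph (Fin n))
    {S' : Finset (Fin n)} {u : Fin n} (hu : u ∈ S') :
    fmm G S' ≤ scoreM G S' u := by
  refine sInf_range_le hτ (fun t => ?_)
  exact Nat.sInf_le ⟨u, by simpa using hu, rfl⟩

private lemma scoreM_le_fmm {n τ : ℕ} (hτ : 0 < τ) (G : Fin τ → SimpleGraph (Fin n))
    {S : Finset (Fin n)} {w : Fin n} (hw : w ∈ S)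
    (hmin : ∀ u ∈ S, scoreM G S w ≤ scoreM G S u) :
    scoreM G S w ≤ fmm G S := by
  have hne : (Set.range fun t => minDensity (G t) S).Nonempty :=
    ⟨minDensity (G ⟨0, hτ⟩) S, ⟨0, hτ⟩, rfl⟩
  obtain ⟨t, ht⟩ := Nat.sInf_mem hne
  have hne2 : ((fun u => degIn (G t) S u) '' (S : Set (Fin n))).Nonempty :=
    ⟨degIn (G t) S w, w, by simpa using hw, rfl⟩
  obtain ⟨u, hu, hu2⟩ := Nat.sInf_mem hne2
  have hmem : u ∈ S := by simpa using hu
  calc scoreM G S w ≤ scoreM G S u := hmin u hmem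
    _ ≤ degIn (G t) S u := Nat.sInf_le ⟨t, rfl⟩
    _ = minDensity (G t) S := hu2
    _ = fmm G S := ht

/-- The `Qr-FindBFF_M` algorithm (minimum-`score_m` peeling stopped when a
query node would be removed) solves the Qr-BFF-mm problem optimally: if `j` is the least index
at which a query node is removed, then some set in the chain `S 0, …, S j` contains `Q` and
attains the maximum of `f_mm` over all sets containing `Q`. -/
theorem qrFindBffM_optimal {n τ : ℕ} (hτ : 0 < τ)
    (G : Fin τ → SimpleGraph (Fin n))
    (Q : Finset (Fin n)) (hQ : Q.Nonempty) (hQne : Q ≠ Finset.univ)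
    (S : ℕ → Finset (Fin n)) (v : ℕ → Fin n) (hpeel : IsScoreMPeeling G S v)
    (j : ℕ) (hj : j < n - 1) (hvjQ : v j ∈ Q) (hleast : ∀ i < j, v i ∉ Q) :
    ∃ i ≤ j, Q ⊆ S i ∧
      ∀ S' : Finset (Fin n), Q ⊆ S' → fmm G S' ≤ fmm G (S i) := by
  obtain ⟨hS0, hstep⟩ := hpeel
  -- any set avoiding the first i removed vertices is contained in S i
  have hsub : ∀ (T : Finset (Fin n)), ∀ i ≤ j, (∀ k < i, v k ∉ T) → T ⊆ S i := by
    intro T i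
    induction i with
    | zero => intro _ _; rw [hS0]; exact Finset.subset_univ T
    | succ m ih =>
      intro hij hav
      have hmn : m < n - 1 := by omega
      obtain ⟨_, hSm, _⟩ := hstep m hmn
      rw [hSm]
      intro x hx
      rw [Finset.mem_sdiff]
      refine ⟨ih (by omega) (fun k hk => hav k (by omega)) hx, ?_⟩
      simp only [Finset.mem_singleton]
      rintro rfl
      exact hav m (Nat.lt_succ_self m) hx
  have hQsub : ∀ i ≤ j, Q ⊆ S i := by
    intro i hi
    exact hsub Q i hi (fun k hk => hleast k (by omega))
  obtain ⟨i, hi_mem, hi_max⟩ := Finset.exists_max_image (Finset.range (j + 1))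
    (fun i => fmm G (S i)) ⟨0, by simp⟩
  have hij : i ≤ j := by
    have := Finset.mem_range.mp hi_mem; omega
  refine ⟨i, hij, hQsub i hij, ?_⟩
  intro S' hS'
  have hex : ∃ k, v k ∈ S' := ⟨j, hS' hvjQ⟩
  set k := Nat.find hex with hk
  have hvk : v k ∈ S' := Nat.find_spec hex
  have hkj : k ≤ j := Nat.find_min' hex (hS' hvjQ)
  have hS'sub : S' ⊆ S k :=
    hsub S' k hkj (fun m hm => Nat.find_min hex hm)
  have hkn : k < n - 1 := by omega
  obtain ⟨hvkS, _, hmin⟩ := hstep k hkn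
  calc fmm G S' ≤ scoreM G S' (v k) := fmm_le_scoreM hτ G hvk
    _ ≤ scoreM G (S k) (v k) := scoreM_mono hτ G hS'sub (v k)
    _ ≤ fmm G (S k) := scoreM_le_fmm hτ G hvkS hmin
    _ ≤ fmm G (S i) := hi_max k (Finset.mem_range.mpr (by omega))
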